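/- Let T be a tree (a connected acyclic simple graph) on n ≥ 2 vertices. Then T is word-representable, the minimal length of a word that word-represents T equals 2n − 2; that is, there exists a word of length 2n − 2 that word-represents T, and every word that word-represents T has length at least 2n − 2. -/

import Mathlib

variable {V : Type*}

/-- The restriction of a word `w` to the letters `x` and `y`. -/
def restrictWord [DecidableEq V] (w : List V) (x y : V) : List V :=
  w.filter fun z => decide (z = x ∨ z = y)

/-- `x` and `y` alternate in `w`: the restriction of `w` to `{x, y}` has no two
consecutive equal letters. -/
def Alternates [DecidableEq V] (w : List V) (x y : V) : Prop :=
  (restrictWord w x y).Chain' (· ≠ ·)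

/-- `w` word-represents the simple graph `G`: every vertex occurs in `w`, and two distinct
vertices are adjacent iff they alternate in `w`. -/
def Represents [DecidableEq V] (G : SimpleGraph V) (w : List V) : Prop :=
  (∀ v : V, v ∈ w) ∧ ∀ x y : V, x ≠ y → (G.Adj x y ↔ Alternates w x y)

/-- `ℓ(G)`: the minimal length of a word-representant of `G`. -/
noncomputable def minRepLength [DecidableEq V] (G : SimpleGraph V) : ℕ :=
  sInf {n | ∃ w : List V, Represents G w ∧ w.length = n}

set_option linter.unusedSectionVars false

section helpers
variable [DecidableEq V]

lemma restrictWord_comm (w : List V) (x y : V) : restrictWord w x y = restrictWord w y x := by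
  unfold restrictWord
  apply List.filter_congr
  intro a _
  simp [or_comm]

lemma alternates_comm {w : List V} {x y : V} : Alternates w x y ↔ Alternates w y x := by
  unfold Alternates
  rw [restrictWord_comm]

lemma alternates_of_count_one {w : List V} {x y : V} (hxy : x ≠ y)
    (hx : w.count x = 1) (hy : w.count y = 1) : Alternates w x y := by
  have hnd : (restrictWord w x y).Nodup := by
    rw [List.nodup_iff_count_le_one]
    intro a
    rcases eq_or_ne a x with rfl | hax
    · exact le_trans ((List.filter_sublist).count_le a) (le_of_eq hx)
    rcases eq_or_ne a y with rfl | hay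
    · exact le_trans ((List.filter_sublist).count_le a) (le_of_eq hy)
    have : a ∉ restrictWord w x y := by
      intro hmem
      have := List.of_mem_filter hmem
      simp at this
      tauto
    simp [List.count_eq_zero_of_not_mem this]
  exact hnd.isChain

lemma triangle_cycle {G : SimpleGraph V} {a b c : V} (hab : G.Adj a b) (hbc : G.Adj b c)
    (hca : G.Adj c a) (hac : a ≠ c) :
    (SimpleGraph.Walk.cons hab (SimpleGraph.Walk.cons hbc
      (SimpleGraph.Walk.cons hca SimpleGraph.Walk.nil))).IsCycle := by
  simp [SimpleGraph.Walk.isCycle_def, SimpleGraph.Walk.isTrail_def, hab.ne, hbc.ne, hca.ne, hac,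
    Ne.symm hac, Sym2.eq_iff, hab.ne', hbc.ne', hca.ne']

end helpers

lemma lower_bound [Fintype V] [DecidableEq V] (G : SimpleGraph V) (hacyc : G.IsAcyclic)
    (w : List V) (hw : Represents G w) : 2 * Fintype.card V - 2 ≤ w.length := by
  classical
  set S : Finset V := Finset.univ.filter (fun v => w.count v = 1) with hSdef
  have hadjS : ∀ a ∈ S, ∀ b ∈ S, a ≠ b → G.Adj a b := by
    intro a ha b hb hab
    rw [hSdef, Finset.mem_filter] at ha hb
    exact (hw.2 a b hab).mpr (alternates_of_count_one hab ha.2 hb.2)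
  have hS2 : S.card ≤ 2 := by
    by_contra h
    push_neg at h
    obtain ⟨a, b, c, ha, hb, hc, hab, hac, hbc⟩ := Finset.two_lt_card_iff.mp h
    exact hacyc _ (triangle_cycle (hadjS a ha b hb hab) (hadjS b hb c hc hbc)
      ((hadjS a ha c hc hac).symm) hac)
  have huniv : w.toFinset = Finset.univ :=
    Finset.eq_univ_of_forall fun v => List.mem_toFinset.mpr (hw.1 v)
  have hlen : (∑ v, w.count v) = w.length := by
    rw [← huniv]; exact w.sum_toFinset_count_eq_length
  have hsplit := Finset.sum_filter_add_sum_filter_not Finset.univ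
    (fun v => w.count v = 1) (fun v => w.count v)
  have hA : S.card • 1 ≤ ∑ v ∈ S, w.count v := by
    apply Finset.card_nsmul_le_sum
    intro x hx
    rw [hSdef, Finset.mem_filter] at hx
    omega
  have hB : (Finset.univ.filter (fun v => ¬ w.count v = 1)).card • 2 ≤
      ∑ v ∈ Finset.univ.filter (fun v => ¬ w.count v = 1), w.count v := by
    apply Finset.card_nsmul_le_sum
    intro x hx
    rw [Finset.mem_filter] at hx
    have : w.count x ≠ 0 := by
      simp only [ne_eq, List.count_eq_zero]
      intro hnot; exact hnot (hw.1 x)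
    omega
  have hcards : S.card + (Finset.univ.filter (fun v => ¬ w.count v = 1)).card
      = Fintype.card V := by
    rw [hSdef, Finset.card_filter_add_card_filter_not, Finset.card_univ]
  simp only [smul_eq_mul] at hA hB
  rw [hSdef] at hA hS2 hcards
  omega

open SimpleGraph in
lemma two_le_degree_of_internal [Fintype V] [DecidableEq V] {G : SimpleGraph V}
    [DecidableRel G.Adj] {a b u : V} (p : G.Walk a b) (hp : p.IsPath)
    (hu : u ∈ p.support) (hua : u ≠ a) (hub : u ≠ b) : 2 ≤ G.degree u := by
  obtain ⟨t, hut, r', hr'⟩ := Walk.exists_eq_cons_of_ne hub (p.dropUntil u hu)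
  obtain ⟨sv, hus, q', hq'⟩ := Walk.exists_eq_cons_of_ne hua ((p.takeUntil u hu).reverse)
  have hsv_mem : sv ∈ (p.takeUntil u hu).support := by
    have : sv ∈ (p.takeUntil u hu).reverse.support := by rw [hq']; simp
    rwa [Walk.support_reverse, List.mem_reverse] at this
  have ht_mem : t ∈ (p.dropUntil u hu).support.tail := by rw [hr']; simp
  have hnd : (p.support).Nodup := hp.support_nodup
  have hsupp : p.support = (p.takeUntil u hu).support ++ (p.dropUntil u hu).support.tail := by
    rw [← Walk.support_append, Walk.take_spec]
  rw [hsupp] at hnd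
  have hst : sv ≠ t := by
    have hdisj := (List.nodup_append'.mp hnd).2.2
    intro h; exact hdisj hsv_mem (h ▸ ht_mem)
  have hsub : ({sv, t} : Finset V) ⊆ G.neighborFinset u := by
    intro z hz
    rw [Finset.mem_insert, Finset.mem_singleton] at hz
    rcases hz with rfl | rfl
    · exact (G.mem_neighborFinset _ _).mpr hus
    · exact (G.mem_neighborFinset _ _).mpr hut
  calc 2 = ({sv, t} : Finset V).card := (Finset.card_pair hst).symm
    _ ≤ (G.neighborFinset u).card := Finset.card_le_card hsub
    _ = G.degree u := G.card_neighborFinset_eq_degree u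

lemma restrictWord_map {s : Set V} [DecidableEq V] (w' : List s) (x y : s) :
    restrictWord (w'.map Subtype.val) ↑x ↑y = (restrictWord w' x y).map Subtype.val := by
  unfold restrictWord
  rw [List.filter_map]
  congr 1
  apply List.filter_congr
  intro z _
  exact decide_eq_decide.mpr (by simp [Subtype.ext_iff])

lemma alternates_map {s : Set V} [DecidableEq V] (w' : List s) (x y : s) :
    Alternates (w'.map Subtype.val) ↑x ↑y ↔ Alternates w' x y := by
  unfold Alternates
  rw [restrictWord_map]
  simp only [List.Chain']
  rw [List.isChain_map]
  have : (fun a b : s => (a : V) ≠ (b : V)) = (fun a b : s => a ≠ b) := by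
    funext a b
    simp [Subtype.ext_iff]
  rw [this]

lemma restrict_eq_replicate [DecidableEq V] {l : List V} {u v : V} (hu : u ∉ l) :
    (l.filter fun z => decide (z = u ∨ z = v)) = List.replicate (l.count v) v := by
  rw [← List.filter_eq (l := l) v]
  apply List.filter_congr
  intro z hz
  have hzu : z ≠ u := fun h => hu (h ▸ hz)
  simp [hzu]

universe u

lemma exists_word : ∀ (n : ℕ) {W : Type u} [Fintype W] [DecidableEq W] (T : SimpleGraph W),
    T.IsTree → Fintype.card W = n → 2 ≤ n →
    ∃ w : List W, Represents T w ∧ w.length = 2 * n - 2 ∧ ∀ x, w.count x ≤ 2 := by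
  intro n
  induction n using Nat.strong_induction_on with
  | _ n ih =>
  intro W _ _ T hT hcard hn
  rcases eq_or_lt_of_le hn with h2 | h3
  · -- base case: n = 2
    subst h2
    have hcard2 : (Finset.univ : Finset W).card = 2 := by rw [Finset.card_univ, hcard]
    obtain ⟨a, b, hab, huniv⟩ := Finset.card_eq_two.mp hcard2
    have hmem : ∀ x : W, x = a ∨ x = b := fun x => by
      have hx := Finset.mem_univ x
      rw [huniv] at hx
      simpa using hx
    have hadj : T.Adj a b := by
      obtain ⟨p⟩ := hT.1.preconnected a b
      cases p with
      | nil => exact absurd rfl hab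
      | @cons _ c _ h q =>
        rcases hmem c with rfl | rfl
        · exact absurd rfl h.ne
        · exact h
    refine ⟨[a, b], ⟨?_, ?_⟩, ?_, ?_⟩
    · intro x; rcases hmem x with rfl | rfl <;> simp
    · have halt1 : Alternates [a, b] a b := by
        simp [Alternates, restrictWord, List.filter]
        simpa [List.Chain'] using hab
      have halt2 : Alternates [a, b] b a := by
        simp [Alternates, restrictWord, List.filter]
        simpa [List.Chain'] using hab
      intro x y hxy
      rcases hmem x with rfl | rfl <;> rcases hmem y with rfl | rfl
      · exact absurd rfl hxy
      · exact iff_of_true hadj halt1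
      · exact iff_of_true hadj.symm halt2
      · exact absurd rfl hxy
    · simp
    · intro x
      exact le_trans List.count_le_length (by simp)
  · -- inductive step: 2 < n
    classical
    haveI : DecidableRel T.Adj := Classical.decRel _
    have hedge : T.edgeFinset.card + 1 = n := by rw [← hcard]; exact hT.card_edgeFinset
    have hdeg1 : ∃ u, T.degree u ≤ 1 := by
      by_contra hcon
      push_neg at hcon
      have hsum := T.sum_degrees_eq_twice_card_edges
      have hge : ∑ _v : W, 2 ≤ ∑ v : W, T.degree v :=
        Finset.sum_le_sum fun v _ => hcon v
      rw [Finset.sum_const, Finset.card_univ, hcard, smul_eq_mul] at hge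
      omega
    obtain ⟨u, hu1⟩ := hdeg1
    have hupos : 0 < T.degree u := by
      rw [SimpleGraph.degree_pos_iff_exists_adj]
      obtain ⟨b, hbu⟩ := Fintype.exists_ne_of_one_lt_card (by omega) u
      obtain ⟨p⟩ := hT.1.preconnected u b
      cases p with
      | nil => exact absurd rfl hbu
      | cons h q => exact ⟨_, h⟩
    have hdeg : T.degree u = 1 := by omega
    have hns : (T.neighborFinset u).card = 1 := by
      rw [T.card_neighborFinset_eq_degree, hdeg]
    obtain ⟨v, hvset⟩ := Finset.card_eq_one.mp hns
    have hadj : T.Adj u v := by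
      have : v ∈ T.neighborFinset u := by rw [hvset]; exact Finset.mem_singleton_self v
      rwa [SimpleGraph.mem_neighborFinset] at this
    have hvuniq : ∀ y : W, T.Adj u y → y = v := by
      intro y hy
      have : y ∈ T.neighborFinset u := (SimpleGraph.mem_neighborFinset _ _ _).mpr hy
      rw [hvset] at this
      exact Finset.mem_singleton.mp this
    set s : Set W := {x | x ≠ u} with hsdef
    haveI : DecidablePred (· ∈ s) := Classical.decPred _
    have hvs : v ∈ s := hadj.ne'
    have hcards : Fintype.card s = n - 1 := by
      calc Fintype.card s = Fintype.card {x // ¬ x = u} :=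
            Fintype.card_congr (Equiv.subtypeEquivRight (fun x => by simp [hsdef]))
        _ = Fintype.card W - Fintype.card {x // x = u} := Fintype.card_subtype_compl _
        _ = n - 1 := by rw [hcard, Fintype.card_subtype_eq]
    have htree' : (T.induce s).IsTree := by
      constructor
      · apply T.induce_connected_of_patches v hvs
        intro a ha
        obtain ⟨p0⟩ := hT.1.preconnected v a
        set p : T.Walk v a := p0.toPath.1 with hpdef
        have hp : p.IsPath := p0.toPath.2
        have hunot : u ∉ p.support := by
          intro hmemu
          have h2le := two_le_degree_of_internal p hp hmemu hadj.ne (Ne.symm ha)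
          omega
        refine ⟨{x | x ∈ p.support}, ?_, p.start_mem_support, p.end_mem_support, ?_⟩
        · intro x hx hxu
          exact hunot (hxu ▸ hx)
        · exact p.connected_induce_support.preconnected _ _
      · intro z c hc
        exact hT.2 _ (hc.map (f := (SimpleGraph.Embedding.induce s (G := T)).toHom)
          Subtype.val_injective)
    obtain ⟨w', hrep', hlen', hcnt'⟩ := ih (n - 1) (by omega) (T.induce s) htree' hcards (by omega)
    set w : List W := w'.map Subtype.val with hwdef
    have humem : u ∉ w := by
      intro hm
      obtain ⟨⟨x, hx⟩, _, heq⟩ := List.mem_map.mp hm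
      exact hx heq
    have hcntw : ∀ x : s, w.count ↑x = w'.count x := fun x =>
      List.count_map_of_injective _ _ Subtype.val_injective _
    have hvw : v ∈ w := List.mem_map.mpr ⟨⟨v, hvs⟩, hrep'.1 _, rfl⟩
    obtain ⟨w1, w2, hsplit⟩ := List.append_of_mem hvw
    have hwc2 : ∀ x : W, x ∈ s → w.count x ≤ 2 := by
      intro x hx
      rw [show x = ((⟨x, hx⟩ : s) : W) from rfl, hcntw]
      convert hcnt' ⟨x, hx⟩ using 2
      exact lawful_beq_subsingleton _ _
    have hc12 : w1.count v + w2.count v ≤ 1 := by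
      have h := hwc2 v hvs
      rw [hsplit, List.count_append, List.count_cons] at h
      simp at h
      omega
    have hu1 : u ∉ w1 := fun h => humem (hsplit ▸ List.mem_append_left _ h)
    have hu2 : u ∉ w2 := fun h =>
      humem (hsplit ▸ List.mem_append_right _ (List.mem_cons_of_mem _ h))
    have hrest : ∀ x y : W, u ≠ x → u ≠ y →
        restrictWord (w1 ++ u :: v :: u :: w2) x y = restrictWord w x y := by
      intro x y hux huy
      rw [hsplit]
      simp only [restrictWord, List.filter_append, List.filter_cons]
      have hd : (decide (u = x ∨ u = y)) = false := by simp [hux, huy]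
      simp [hd]
    have hmain : ∀ y : W, y ≠ u → (T.Adj u y ↔ Alternates (w1 ++ u :: v :: u :: w2) u y) := by
      intro y hyu
      constructor
      · intro hady
        have hyv : y = v := hvuniq y hady
        rw [hyv]
        unfold Alternates
        have hr1 : restrictWord (w1 ++ u :: v :: u :: w2) u v
            = List.replicate (w1.count v) v ++ u :: v :: u :: List.replicate (w2.count v) v := by
          simp only [restrictWord, List.filter_append, List.filter_cons]
          rw [restrict_eq_replicate hu1, restrict_eq_replicate hu2]
          simp
        rw [hr1]
        have huy : u ≠ v := hadj.ne
        have h01 : (w1.count v = 0 ∧ w2.count v = 0) ∨ (w1.count v = 1 ∧ w2.count v = 0)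
            ∨ (w1.count v = 0 ∧ w2.count v = 1) := by omega
        rcases h01 with ⟨h1, h2⟩ | ⟨h1, h2⟩ | ⟨h1, h2⟩ <;> rw [h1, h2] <;>
          simp [List.Chain', List.isChain_cons_cons, huy, Ne.symm huy]
      · intro halt
        by_contra hnadj
        have hyv : y ≠ v := fun h => hnadj (h ▸ hadj)
        have hr : restrictWord (w1 ++ u :: v :: u :: w2) u y
            = (w1.filter fun z => decide (z = u ∨ z = y)) ++
              u :: u :: (w2.filter fun z => decide (z = u ∨ z = y)) := by
          simp only [restrictWord, List.filter_append, List.filter_cons]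
          simp [hadj.ne', Ne.symm hyv]
        unfold Alternates at halt
        rw [hr] at halt
        have := (List.isChain_append_cons_cons.mp halt).2.1
        exact this rfl
    refine ⟨w1 ++ u :: v :: u :: w2, ⟨?_, ?_⟩, ?_, ?_⟩
    · intro x
      by_cases hxu : x = u
      · subst hxu; simp
      · have hx : x ∈ w := List.mem_map.mpr ⟨⟨x, hxu⟩, hrep'.1 _, rfl⟩
        rw [hsplit] at hx
        simp only [List.mem_append, List.mem_cons] at hx ⊢
        tauto
    · intro x y hxy
      rcases eq_or_ne x u with rfl | hxu
      · exact hmain y (Ne.symm hxy)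
      rcases eq_or_ne y u with rfl | hyu
      · rw [T.adj_comm, alternates_comm]
        exact hmain x hxu
      · have hxs : x ∈ s := hxu
        have hys : y ∈ s := hyu
        calc T.Adj x y ↔ (T.induce s).Adj ⟨x, hxs⟩ ⟨y, hys⟩ := by simp
          _ ↔ Alternates w' ⟨x, hxs⟩ ⟨y, hys⟩ :=
              hrep'.2 _ _ (fun h => hxy (congrArg Subtype.val h))
          _ ↔ Alternates w x y := by
              rw [hwdef]
              exact (alternates_map w' ⟨x, hxs⟩ ⟨y, hys⟩).symm
          _ ↔ Alternates (w1 ++ u :: v :: u :: w2) x y := by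
              unfold Alternates
              rw [hrest x y (Ne.symm hxu) (Ne.symm hyu)]
    · have hlw : w.length = 2 * (n - 1) - 2 := by rw [hwdef, List.length_map, hlen']
      rw [hsplit] at hlw
      simp only [List.length_append, List.length_cons] at hlw ⊢
      omega
    · intro x
      rcases eq_or_ne x u with rfl | hxu
      · simp [List.count_append, List.count_cons, List.count_eq_zero_of_not_mem hu1,
          List.count_eq_zero_of_not_mem hu2, hadj.ne, hadj.ne']
      · have h := hwc2 x hxu
        rw [hsplit] at h
        simp only [List.count_append, List.count_cons] at h ⊢
        simp [Ne.symm hxu] at h ⊢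
        omega


/-- Let `T` be a tree on `n ≥ 2` vertices. Then `T` is word-representable
and `ℓ(T) = 2n − 2`: there is a word-representant of length `2n − 2`, and every
word-representant has length at least `2n − 2`. -/
theorem tree_min_length [Fintype V] [DecidableEq V]
    (T : SimpleGraph V) (hT : T.IsTree) (n : ℕ) (hn : Fintype.card V = n) (h2 : 2 ≤ n) :
    (∃ w : List V, Represents T w ∧ w.length = 2 * n - 2) ∧
    (∀ w : List V, Represents T w → 2 * n - 2 ≤ w.length) := by
  constructor
  · obtain ⟨w, hrep, hlen, -⟩ := exists_word n T hT hn h2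
    exact ⟨w, hrep, hlen⟩
  · intro w hw
    have h := lower_bound T hT.2 w hw
    rwa [hn] at h
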